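/- Let K be a finite abstract simplicial complex, w : K → (0,∞), φ_w the induced weight, H a hypergraph with ΔH = K, and n ≥ 0. Then the n-th φ_w-weighted embedded homology H_n(H, φ_w; F) is linearly isomorphic to the unweighted embedded homology H_n(H; F). -/

import Mathlib

/-- The `φ`-weighted simplicial boundary operator on the free vector space on the
finite subsets of a finite linearly ordered vertex type `V`:
`∂^φ σ = Σ_{v ∈ σ} (−1)^{idx σ v} φ(σ, σ \ v) (σ \ v)`, with `∂^φ = 0` on `0`-simplices. -/
noncomputable def wbd (𝕜 : Type*) [RCLike 𝕜] {V : Type*} [Fintype V] [LinearOrder V]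
    (phi : Finset V → Finset V → 𝕜) :
    (Finset V → 𝕜) →ₗ[𝕜] (Finset V → 𝕜) :=
  ∑ σ : Finset V,
    LinearMap.toSpanSingleton 𝕜 _
        (if 2 ≤ σ.card then
            σ.sum fun v =>
              ((-1 : 𝕜) ^ (σ.filter (· < v)).card * phi σ (σ.erase v)) •
                (Pi.single (σ.erase v) (1 : 𝕜) : Finset V → 𝕜)
          else 0) ∘ₗ
      LinearMap.proj σ

/-- The span of the `m`-vertex hyperedges of `H` inside the chains. -/
noncomputable def hspan (𝕜 : Type*) [RCLike 𝕜] {V : Type*} [Fintype V] [LinearOrder V]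
    (H : Set (Finset V)) (m : ℕ) : Submodule 𝕜 (Finset V → 𝕜) :=
  Submodule.span 𝕜 {f | ∃ σ ∈ H, σ.card = m ∧ f = (Pi.single σ 1 : Finset V → 𝕜)}

section aux
variable {𝕜 : Type*} [RCLike 𝕜] {V : Type*} [Fintype V] [LinearOrder V]

lemma wbd_single (phi : Finset V → Finset V → 𝕜) (σ : Finset V) :
    wbd 𝕜 phi (Pi.single σ 1) =
      (if 2 ≤ σ.card then
          σ.sum fun v =>
            ((-1 : 𝕜) ^ (σ.filter (· < v)).card * phi σ (σ.erase v)) •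
              (Pi.single (σ.erase v) (1 : 𝕜) : Finset V → 𝕜)
        else 0) := by
  rw [wbd, LinearMap.sum_apply]
  rw [Finset.sum_eq_single σ]
  · simp
  · intro τ _ hτ
    simp only [LinearMap.comp_apply, LinearMap.proj_apply, LinearMap.toSpanSingleton_apply]
    rw [Pi.single_eq_of_ne hτ, zero_smul]
  · simp

noncomputable def diagE (c : Finset V → 𝕜) (hc : ∀ σ, c σ ≠ 0) :
    (Finset V → 𝕜) ≃ₗ[𝕜] (Finset V → 𝕜) :=
  LinearEquiv.piCongrRight fun σ => LinearEquiv.smulOfNeZero 𝕜 𝕜 (c σ) (hc σ)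

set_option linter.unusedSectionVars false in
lemma diagE_single (c : Finset V → 𝕜) (hc : ∀ σ, c σ ≠ 0) (σ : Finset V) (a : 𝕜) :
    diagE c hc (Pi.single σ a) = (c σ) • (Pi.single σ a : Finset V → 𝕜) := by
  funext τ
  by_cases h : τ = σ
  · subst h
    simp [diagE, LinearEquiv.smulOfNeZero, LinearEquiv.smulOfUnit, DistribMulAction.toLinearEquiv,
      smul_eq_mul, mul_comm]
  · simp [diagE, LinearEquiv.smulOfNeZero, Pi.single_eq_of_ne h]

end aux


/-- the `n`-th `φ_w`-weighted embedded homology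
`(D_n ∩ Ker ∂_n^{φ_w}) / (D_n ∩ ∂_{n+1}^{φ_w}(D_{n+1}))` of a hypergraph `H` is
linearly isomorphic to the unweighted embedded homology
`(D_n ∩ Ker ∂_n) / (D_n ∩ ∂_{n+1}(D_{n+1}))`, where `φ_w(σ,τ) = C·w(σ)/w(τ)` for a
positive evaluation `w` on `K = ΔH` (`C > 0` constant), the unweighted boundary being
the one for the constant weight `1`, and `D_m` the span of the `m`-hyperedges of `H`. -/
theorem stmt19 {𝕜 V : Type*} [RCLike 𝕜] [Fintype V] [LinearOrder V]
    (K : Set (Finset V))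
    (hne : ∀ s ∈ K, s.Nonempty)
    (hdown : ∀ s ∈ K, ∀ t ⊆ s, t.Nonempty → t ∈ K)
    (w : Finset V → ℝ) (hw : ∀ s ∈ K, 0 < w s)
    (C : ℝ) (hC : 0 < C)
    (H : Set (Finset V)) (hH : H ⊆ K)
    (hDelta : K = {t | t.Nonempty ∧ ∃ s ∈ H, t ⊆ s})
    (n : ℕ) :
    Nonempty
      ((↥(hspan 𝕜 H (n + 1) ⊓
            LinearMap.ker (wbd 𝕜 fun σ τ => ((C * w σ / w τ : ℝ) : 𝕜))) ⧸
          ((hspan 𝕜 H (n + 1) ⊓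
              Submodule.map (wbd 𝕜 fun σ τ => ((C * w σ / w τ : ℝ) : 𝕜))
                (hspan 𝕜 H (n + 2))).comap
            (hspan 𝕜 H (n + 1) ⊓
              LinearMap.ker (wbd 𝕜 fun σ τ => ((C * w σ / w τ : ℝ) : 𝕜))).subtype))
        ≃ₗ[𝕜]
       (↥(hspan 𝕜 H (n + 1) ⊓ LinearMap.ker (wbd 𝕜 fun _ _ => (1 : 𝕜))) ⧸
          ((hspan 𝕜 H (n + 1) ⊓
              Submodule.map (wbd 𝕜 fun _ _ => (1 : 𝕜)) (hspan 𝕜 H (n + 2))).comap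
            (hspan 𝕜 H (n + 1) ⊓
              LinearMap.ker (wbd 𝕜 fun _ _ => (1 : 𝕜))).subtype))) := by

  classical
  set φ : Finset V → Finset V → 𝕜 := fun σ τ => ((C * w σ / w τ : ℝ) : 𝕜) with hφ
  set c : Finset V → 𝕜 := fun σ => if σ ∈ K then ((C ^ σ.card * w σ : ℝ) : 𝕜) else 1 with hcdef
  have hc : ∀ σ, c σ ≠ 0 := by
    intro σ
    by_cases h : σ ∈ K
    · simp only [hcdef, if_pos h]
      rw [ne_eq, RCLike.ofReal_eq_zero]
      have := hw σ h
      positivity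
    · simp [hcdef, if_neg h]
  set e := diagE c hc with hedef
  -- key scalar identity
  have hkey : ∀ σ ∈ K, ∀ v ∈ σ, 2 ≤ σ.card → φ σ (σ.erase v) * c (σ.erase v) = c σ := by
    intro σ hσ v hv h2
    have hτK : σ.erase v ∈ K := by
      apply hdown σ hσ _ (Finset.erase_subset v σ)
      rw [← Finset.card_pos, Finset.card_erase_of_mem hv]; omega
    have hcard : (σ.erase v).card = σ.card - 1 := Finset.card_erase_of_mem hv
    simp only [hcdef, hφ, if_pos hσ, if_pos hτK, ← RCLike.ofReal_mul]
    congr 1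
    have hwτ : w (σ.erase v) ≠ 0 := ne_of_gt (hw _ hτK)
    have hsc : σ.card = (σ.erase v).card + 1 := by omega
    rw [hsc, pow_succ]
    field_simp
  -- e maps hspan to itself
  have hmapD : ∀ m : ℕ, Submodule.map (e : (Finset V → 𝕜) →ₗ[𝕜] (Finset V → 𝕜)) (hspan 𝕜 H m)
      = hspan 𝕜 H m := by
    intro m
    apply le_antisymm
    · rw [hspan, Submodule.map_span, Submodule.span_le]
      rintro _ ⟨f, ⟨σ, hσ, hcard, rfl⟩, rfl⟩
      simp only [SetLike.mem_coe, hedef]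
      rw [LinearEquiv.coe_coe, diagE_single]
      exact Submodule.smul_mem _ _ (Submodule.subset_span ⟨σ, hσ, hcard, rfl⟩)
    · rw [hspan, Submodule.span_le]
      rintro f ⟨σ, hσ, hcard, rfl⟩
      rw [SetLike.mem_coe, Submodule.mem_map]
      refine ⟨(c σ)⁻¹ • (Pi.single σ 1 : Finset V → 𝕜),
        Submodule.smul_mem _ _ (Submodule.subset_span ⟨σ, hσ, hcard, rfl⟩), ?_⟩
      rw [LinearEquiv.coe_coe, map_smul, hedef, diagE_single, smul_smul,
        inv_mul_cancel₀ (hc σ), one_smul]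
  -- commutation on hspan
  have hcomm : ∀ (m : ℕ) (x : Finset V → 𝕜), x ∈ hspan 𝕜 H m →
      e (wbd 𝕜 φ x) = wbd 𝕜 (fun _ _ => (1 : 𝕜)) (e x) := by
    intro m x hx
    induction hx using Submodule.span_induction with
    | mem f hf =>
      obtain ⟨σ, hσH, hcard, rfl⟩ := hf
      have hσK : σ ∈ K := hH hσH
      rw [hedef, diagE_single, map_smul, wbd_single, wbd_single]
      by_cases h2 : 2 ≤ σ.card
      · rw [if_pos h2, if_pos h2, map_sum, Finset.smul_sum]
        refine Finset.sum_congr rfl fun v hv => ?_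
        rw [map_smul, diagE_single, smul_smul, smul_smul]
        congr 1
        rw [mul_assoc, hkey σ hσK v hv h2, mul_one]
        ring
      · rw [if_neg h2, if_neg h2, map_zero, smul_zero]
    | zero => simp
    | add a b _ _ ha hb => simp only [map_add, ha, hb]
    | smul r a _ ha => simp only [map_smul, ha]
  set D₁ := hspan 𝕜 H (n + 1) with hD1
  set D₂ := hspan 𝕜 H (n + 2) with hD2
  set A := D₁ ⊓ LinearMap.ker (wbd 𝕜 φ) with hA
  set A' := D₁ ⊓ LinearMap.ker (wbd 𝕜 (fun _ _ => (1:𝕜))) with hA'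
  set B := D₁ ⊓ Submodule.map (wbd 𝕜 φ) D₂ with hB
  set B' := D₁ ⊓ Submodule.map (wbd 𝕜 (fun _ _ => (1:𝕜))) D₂ with hB'
  have ecoe : ∀ x : Finset V → 𝕜, (e : (Finset V → 𝕜) →ₗ[𝕜] (Finset V → 𝕜)) x = e x :=
    fun _ => rfl
  have hkerE : Submodule.map (e : (Finset V → 𝕜) →ₗ[𝕜] (Finset V → 𝕜)) A = A' := by
    apply le_antisymm
    · rintro y ⟨x, hx, rfl⟩
      rw [SetLike.mem_coe, Submodule.mem_inf] at hx
      obtain ⟨hxD, hxk⟩ := hx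
      rw [hA', Submodule.mem_inf]
      constructor
      · rw [hD1, ← hmapD (n + 1)]
        exact Submodule.mem_map_of_mem (hD1 ▸ hxD)
      · rw [LinearMap.mem_ker, ecoe, ← hcomm (n + 1) x (hD1 ▸ hxD),
          LinearMap.mem_ker.mp hxk, map_zero]
    · intro y hy
      rw [hA', Submodule.mem_inf] at hy
      obtain ⟨hyD, hyk⟩ := hy
      have : y ∈ Submodule.map (e : (Finset V → 𝕜) →ₗ[𝕜] (Finset V → 𝕜)) (hspan 𝕜 H (n + 1)) := by
        rw [hmapD]; exact hD1 ▸ hyD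
      obtain ⟨x, hxD, rfl⟩ := this
      refine Submodule.mem_map_of_mem ?_
      rw [hA, Submodule.mem_inf]
      refine ⟨hD1 ▸ hxD, ?_⟩
      rw [LinearMap.mem_ker]
      apply e.injective
      rw [map_zero, hcomm (n + 1) x hxD, ← ecoe]
      exact LinearMap.mem_ker.mp hyk
  have himE : Submodule.map (e : (Finset V → 𝕜) →ₗ[𝕜] (Finset V → 𝕜)) B = B' := by
    apply le_antisymm
    · rintro y ⟨x, hx, rfl⟩
      rw [SetLike.mem_coe, Submodule.mem_inf] at hx
      obtain ⟨hxD, hxi⟩ := hx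
      obtain ⟨z, hzD, hz⟩ := hxi
      rw [hB', Submodule.mem_inf]
      constructor
      · rw [hD1, ← hmapD (n + 1)]
        exact Submodule.mem_map_of_mem (hD1 ▸ hxD)
      · refine ⟨e z, ?_, ?_⟩
        · rw [hD2, ← hmapD (n + 2)]
          exact Submodule.mem_map_of_mem (hD2 ▸ hzD)
        · rw [← hcomm (n + 2) z (hD2 ▸ hzD), hz, ecoe]
    · intro y hy
      rw [hB', Submodule.mem_inf] at hy
      obtain ⟨hyD, u, huD, hu⟩ := hy
      have : u ∈ Submodule.map (e : (Finset V → 𝕜) →ₗ[𝕜] (Finset V → 𝕜)) (hspan 𝕜 H (n + 2)) := by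
        rw [hmapD]; exact hD2 ▸ huD
      obtain ⟨z, hzD, rfl⟩ := this
      have hy' : y = e (wbd 𝕜 φ z) := by
        rw [hcomm (n + 2) z hzD, ← hu, ecoe]
      have hxD1 : wbd 𝕜 φ z ∈ D₁ := by
        have : y ∈ Submodule.map (e : (Finset V → 𝕜) →ₗ[𝕜] (Finset V → 𝕜)) (hspan 𝕜 H (n + 1)) := by
          rw [hmapD]; exact hD1 ▸ hyD
        obtain ⟨x, hxD, hx⟩ := this
        have hxx : x = wbd 𝕜 φ z := e.injective (by rw [ecoe] at hx; rw [hx, hy'])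
        rw [hD1]; exact hxx ▸ hxD
      rw [hy']
      refine Submodule.mem_map_of_mem ?_
      rw [hB, Submodule.mem_inf]
      exact ⟨hxD1, ⟨z, hD2 ▸ hzD, rfl⟩⟩
  refine ⟨Submodule.Quotient.equiv _ _
    ((e.submoduleMap A).trans (LinearEquiv.ofEq _ _ hkerE)) ?_⟩
  have ecoe2 : ∀ (x : ↥A),
      ((((e.submoduleMap A).trans (LinearEquiv.ofEq _ _ hkerE)) x : ↥A') : Finset V → 𝕜)
        = e (x : Finset V → 𝕜) := fun _ => rfl
  apply le_antisymm
  · rintro y' ⟨⟨x, hxA⟩, hxB, rfl⟩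
    simp only [SetLike.mem_coe, Submodule.mem_comap, Submodule.subtype_apply] at hxB ⊢
    rw [LinearEquiv.coe_coe, ecoe2]
    rw [← himE]
    exact Submodule.mem_map_of_mem hxB
  · rintro ⟨y, hyA'⟩ hyB'
    rw [Submodule.mem_comap, Submodule.subtype_apply] at hyB'
    rw [← himE] at hyB'
    obtain ⟨x, hxB, hx⟩ := hyB'
    rw [ecoe] at hx
    have hxA : x ∈ A := by
      have : y ∈ Submodule.map (e : (Finset V → 𝕜) →ₗ[𝕜] (Finset V → 𝕜)) A := by
        rw [hkerE]; exact hyA'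
      obtain ⟨x', hx'A, hx'⟩ := this
      rw [ecoe] at hx'
      have : x' = x := e.injective (by rw [hx', hx])
      exact this ▸ hx'A
    refine ⟨⟨x, hxA⟩, ?_, ?_⟩
    · simp only [SetLike.mem_coe, Submodule.mem_comap, Submodule.subtype_apply]
      exact hxB
    · apply Subtype.ext
      rw [LinearEquiv.coe_coe, ecoe2, hx]
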